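/- Let n ≥ 3 and let λ₁ ≥ λ₂ ≥ ... ≥ λₙ be real numbers with ∑_{i=1}^n arctan(λᵢ) ≥ (n-2)π/2. Then λ₁ + (n-1)λₙ ≥ 0. -/

import Mathlib

open Real

lemma aux_tan_mul (k : ℕ) : ∀ x : ℝ, 0 ≤ x → (k : ℝ) * x < π / 2 →
    (k : ℝ) * Real.tan x ≤ Real.tan ((k : ℝ) * x) := by
  induction k with
  | zero => intro x _ _; simp
  | succ k ih =>
    intro x hx h
    have hexp : ((k : ℝ) + 1) * x = (k : ℝ) * x + x := by ring
    push_cast at h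
    rw [hexp] at h
    have hkx0 : 0 ≤ (k : ℝ) * x := by positivity
    have hk : (k : ℝ) * x < π / 2 := by linarith
    have hxlt : x < π / 2 := by linarith
    have htx : 0 ≤ Real.tan x :=
      Real.tan_nonneg_of_nonneg_of_le_pi_div_two hx hxlt.le
    have htkx : 0 ≤ Real.tan ((k : ℝ) * x) :=
      Real.tan_nonneg_of_nonneg_of_le_pi_div_two hkx0 hk.le
    have hpi := Real.pi_pos
    have hne : ∀ y : ℝ, 0 ≤ y → y < π / 2 → ∀ m : ℤ, y ≠ (2 * m + 1) * π / 2 := by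
      intro y hy0 hy m hEq
      rcases le_or_gt 0 m with hm | hm
      · have : (1 : ℝ) ≤ 2 * (m : ℝ) + 1 := by
          have : (0:ℝ) ≤ (m:ℝ) := by exact_mod_cast hm
          linarith
        nlinarith
      · have hm1 : m ≤ -1 := by omega
        have hm' : (m : ℝ) ≤ -1 := by exact_mod_cast hm1
        nlinarith
    have hprod : Real.tan ((k : ℝ) * x) * Real.tan x < 1 := by
      rcases eq_or_lt_of_le hx with rfl | hx'
      · simp
      · have htxpos : 0 < Real.tan x :=
          Real.tan_pos_of_pos_of_lt_pi_div_two hx' hxlt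
        have hlt : (k : ℝ) * x < π / 2 - x := by linarith
        have hstep : Real.tan ((k : ℝ) * x) < Real.tan (π / 2 - x) := by
          apply Real.tan_lt_tan_of_nonneg_of_lt_pi_div_two hkx0 _ hlt
          linarith
        rw [Real.tan_pi_div_two_sub] at hstep
        calc Real.tan ((k : ℝ) * x) * Real.tan x < (Real.tan x)⁻¹ * Real.tan x :=
              mul_lt_mul_of_pos_right hstep htxpos
          _ = 1 := inv_mul_cancel₀ htxpos.ne'
    have hadd : Real.tan ((k : ℝ) * x + x)
        = (Real.tan ((k : ℝ) * x) + Real.tan x) / (1 - Real.tan ((k : ℝ) * x) * Real.tan x) := by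
      apply Real.tan_add'
      exact ⟨hne _ hkx0 hk, hne _ hx hxlt⟩
    have hden0 : 0 < 1 - Real.tan ((k : ℝ) * x) * Real.tan x := by linarith
    have hden1 : 1 - Real.tan ((k : ℝ) * x) * Real.tan x ≤ 1 := by nlinarith
    have hge : Real.tan ((k : ℝ) * x) + Real.tan x
        ≤ (Real.tan ((k : ℝ) * x) + Real.tan x) / (1 - Real.tan ((k : ℝ) * x) * Real.tan x) := by
      rw [le_div_iff₀ hden0]
      nlinarith
    have ihx := ih x hx hk
    push_cast
    rw [hexp, hadd]
    nlinarith

set_option maxHeartbeats 1000000 in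
theorem largest_plus_smallest (n : ℕ) (hn : 3 ≤ n) (lam : Fin n → ℝ)
    (hsort : ∀ i j : Fin n, i ≤ j → lam j ≤ lam i)
    (hsum : ∑ i, Real.arctan (lam i) ≥ ((n : ℝ) - 2) * Real.pi / 2) :
    lam ⟨0, by omega⟩ + ((n : ℝ) - 1) * lam ⟨n - 1, by omega⟩ ≥ 0 := by
  have hn0 : 0 < n := by omega
  have hpi := Real.pi_pos
  have hn3 : (3 : ℝ) ≤ (n : ℝ) := by exact_mod_cast hn
  set i0 : Fin n := ⟨0, by omega⟩ with hi0
  set iN : Fin n := ⟨n - 1, by omega⟩ with hiN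
  set u := Real.arctan (lam i0) with hu
  set v := Real.arctan (lam iN) with hv
  have hmono : ∀ i : Fin n, Real.arctan (lam i) ≤ u :=
    fun i => Real.arctan_strictMono.monotone
      (hsort i0 i (by exact Fin.mk_le_mk.mpr (Nat.zero_le _)))
  -- Step 1
  have h1 : ((n : ℝ) - 2) * π / 2 ≤ (n : ℝ) * u := by
    have : ∑ i, Real.arctan (lam i) ≤ (n : ℝ) * u := by
      calc ∑ i, Real.arctan (lam i) ≤ ∑ _i : Fin n, u := Finset.sum_le_sum fun i _ => hmono i
        _ = (n : ℝ) * u := by simp [mul_comm]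
    linarith [hsum]
  -- Step 2
  have h2 : ((n : ℝ) - 2) * π / 2 - ((n : ℝ) - 1) * u ≤ v := by
    have hsplit : ∑ i, Real.arctan (lam i)
        = Real.arctan (lam iN) + ∑ i ∈ Finset.univ.erase iN, Real.arctan (lam i) :=
      (Finset.add_sum_erase _ _ (Finset.mem_univ iN)).symm
    have hbound : ∑ i ∈ Finset.univ.erase iN, Real.arctan (lam i) ≤ ((n : ℝ) - 1) * u := by
      calc ∑ i ∈ Finset.univ.erase iN, Real.arctan (lam i)
          ≤ ∑ _i ∈ Finset.univ.erase iN, u := Finset.sum_le_sum fun i _ => hmono i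
        _ = ((n : ℝ) - 1) * u := by
            rw [Finset.sum_const, Finset.card_erase_of_mem (Finset.mem_univ iN),
              Finset.card_univ, Fintype.card_fin, nsmul_eq_mul,
              Nat.cast_sub (by omega : 1 ≤ n), Nat.cast_one]
    have hs := hsum
    rw [hsplit] at hs
    rw [hv]
    linarith
  set a := π / 2 - u with ha
  have hult : u < π / 2 := Real.arctan_lt_pi_div_two _
  have hupos : 0 < u := by nlinarith
  have hapos : 0 < a := by rw [ha]; linarith
  have hna : (n : ℝ) * a ≤ π := by rw [ha]; nlinarith
  have halt : a < π / 2 := by nlinarith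
  have h2' : ((n : ℝ) - 1) * a - π / 2 ≤ v := by
    have e : ((n : ℝ) - 1) * a - π / 2 = ((n : ℝ) - 2) * π / 2 - ((n : ℝ) - 1) * u := by
      rw [ha]; ring
    rw [e]; exact h2
  have hvlt : v < π / 2 := Real.arctan_lt_pi_div_two _
  have hclb : -(π / 2) < ((n : ℝ) - 1) * a - π / 2 := by nlinarith
  have hcub : ((n : ℝ) - 1) * a - π / 2 < π / 2 := by nlinarith
  have hlamN : Real.tan (((n : ℝ) - 1) * a - π / 2) ≤ lam iN := by
    rcases eq_or_lt_of_le h2' with hEq | hlt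
    · rw [hEq, hv, Real.tan_arctan]
    · have := Real.tan_lt_tan_of_lt_of_lt_pi_div_two hclb hvlt hlt
      rw [hv, Real.tan_arctan] at this
      linarith
  have hlamu : lam i0 = (Real.tan a)⁻¹ := by
    rw [← Real.tan_pi_div_two_sub, show π / 2 - a = u by rw [ha]; ring, hu, Real.tan_arctan]
  have htapos : 0 < Real.tan a := Real.tan_pos_of_pos_of_lt_pi_div_two hapos halt
  rcases lt_or_ge (((n : ℝ) - 1) * a) (π / 2) with hcase | hcase
  · -- Case A
    have hcast : ((n - 1 : ℕ) : ℝ) = (n : ℝ) - 1 := by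
      rw [Nat.cast_sub (by omega : 1 ≤ n), Nat.cast_one]
    have hkey : ((n : ℝ) - 1) * Real.tan a ≤ Real.tan (((n : ℝ) - 1) * a) := by
      have := aux_tan_mul (n - 1) a hapos.le (by rw [hcast]; exact hcase)
      rwa [hcast] at this
    have htnapos : 0 < Real.tan (((n : ℝ) - 1) * a) := by nlinarith
    have htc : Real.tan (((n : ℝ) - 1) * a - π / 2)
        = -(Real.tan (((n : ℝ) - 1) * a))⁻¹ := by
      rw [show ((n : ℝ) - 1) * a - π / 2 = -(π / 2 - ((n : ℝ) - 1) * a) by ring,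
        Real.tan_neg, Real.tan_pi_div_two_sub]
    have hmulpos : 0 < ((n : ℝ) - 1) * Real.tan a := by nlinarith
    have hinv : (Real.tan (((n : ℝ) - 1) * a))⁻¹ ≤ (((n : ℝ) - 1) * Real.tan a)⁻¹ :=
      inv_anti₀ hmulpos hkey
    have hlamNge : -((((n : ℝ) - 1)) * Real.tan a)⁻¹ ≤ lam iN := by
      rw [htc] at hlamN
      linarith
    have h9 : ((n : ℝ) - 1) * (-((((n : ℝ) - 1)) * Real.tan a)⁻¹) = -(Real.tan a)⁻¹ := by
      rw [mul_inv]
      have hn1 : (n : ℝ) - 1 ≠ 0 := by linarith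
      field_simp
    have hfin : -(Real.tan a)⁻¹ ≤ ((n : ℝ) - 1) * lam iN := by
      rw [← h9]
      exact mul_le_mul_of_nonneg_left hlamNge (by linarith)
    rw [ge_iff_le, hlamu]
    linarith
  · -- Case B
    have htc0 : 0 ≤ Real.tan (((n : ℝ) - 1) * a - π / 2) :=
      Real.tan_nonneg_of_nonneg_of_le_pi_div_two (by linarith) hcub.le
    have hN0 : 0 ≤ lam iN := le_trans htc0 hlamN
    have h00 : 0 ≤ lam i0 := by rw [hlamu]; positivity
    have : 0 ≤ ((n : ℝ) - 1) * lam iN := mul_nonneg (by linarith) hN0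
    linarith
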